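/- Let F_q be a finite field with q elements and let J be an ideal of F_q[x_1,...,x_n,y_1,...,y_m] that contains the field polynomials x_i^q − x_i for all 1 ≤ i ≤ n and y_j^q − y_j for all 1 ≤ j ≤ m. Then the projection of the variety of J equals the variety of the elimination ideal: π_n(V(J)) = V(J ∩ F_q[y_1,...,y_m]), where π_n : F_q^{n+m} → F_q^m forgets the first n coordinates, V(J) = {(a,b) ∈ F_q^{n+m} : f(a,b) = 0 for all f ∈ J}, and J ∩ F_q[y_1,...,y_m] is the set of polynomials in J involving only the y-variables, viewed as an ideal of F_q[y_1,...,y_m]. -/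

import Mathlib

open MvPolynomial

universe u v

namespace ProjVarAux

/-- exponent reduction modulo `x^q = x` -/
def red (q e : ℕ) : ℕ := if e = 0 then 0 else (e - 1) % (q - 1) + 1

lemma red_zero (q : ℕ) : red q 0 = 0 := by simp [red]

lemma red_le {q : ℕ} (hq : 2 ≤ q) (e : ℕ) : red q e ≤ q - 1 := by
  unfold red
  split
  · omega
  · have := Nat.mod_lt (e - 1) (show 0 < q - 1 by omega)
    omega

lemma pow_red_eq {q : ℕ} (hq : 2 ≤ q) {Q : Type*} [CommRing Q] (x : Q) (hx : x ^ q = x) :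
    ∀ e, x ^ e = x ^ red q e := by
  intro e
  induction e using Nat.strong_induction_on with
  | _ e ih =>
    rcases Nat.eq_zero_or_pos e with h0 | h0
    · subst h0; rw [red_zero]
    rcases le_or_gt e (q - 1) with hle | hgt
    · have hre : red q e = e := by
        unfold red
        rw [if_neg (by omega), Nat.mod_eq_of_lt (by omega)]
        omega
      rw [hre]
    · have heq : e - q + q = e := by omega
      have hstep : x ^ e = x ^ (e - q + 1) := by
        calc x ^ e = x ^ (e - q) * x ^ q := by rw [← pow_add, heq]
          _ = x ^ (e - q) * x ^ 1 := by rw [hx, pow_one]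
          _ = x ^ (e - q + 1) := by rw [← pow_add]
      have hlt : e - q + 1 < e := by omega
      have hred : red q (e - q + 1) = red q e := by
        unfold red
        rw [if_neg (by omega), if_neg (by omega)]
        have h3 : e - q + 1 - 1 = e - q := by omega
        have h2 : e - 1 = (e - q) + (q - 1) := by omega
        rw [h3, h2, Nat.add_mod_right]
      rw [hstep, ih _ hlt, hred]

variable {F : Type*} [Field F] [Fintype F] {σ : Type*}

lemma exists_restrict (p : MvPolynomial σ F) :
    ∃ r ∈ restrictDegree σ F (Fintype.card F - 1),
      p - r ∈ Ideal.span
        (Set.range fun i : σ => (X i : MvPolynomial σ F) ^ Fintype.card F - X i) := by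
  classical
  set q := Fintype.card F with hqdef
  have hq2 : 2 ≤ q := Fintype.one_lt_card
  set I : Ideal (MvPolynomial σ F) :=
    Ideal.span (Set.range fun i : σ => (X i : MvPolynomial σ F) ^ q - X i) with hI
  induction p using MvPolynomial.induction_on' with
  | monomial α c =>
    refine ⟨monomial (α.mapRange (red q) (red_zero q)) c, ?_, ?_⟩
    · rw [mem_restrictDegree]
      intro s hs i
      have hsub := MvPolynomial.support_monomial_subset hs
      simp only [Finset.mem_singleton] at hsub
      subst hsub
      rw [Finsupp.mapRange_apply]
      exact red_le hq2 _
    · rw [← Ideal.Quotient.eq]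
      have hxq : ∀ i : σ, (Ideal.Quotient.mk I (X i)) ^ q = Ideal.Quotient.mk I (X i) := by
        intro i
        rw [← map_pow, Ideal.Quotient.eq]
        exact Ideal.subset_span ⟨i, rfl⟩
      rw [monomial_eq, monomial_eq]
      rw [Finsupp.prod_mapRange_index (fun i => pow_zero (X i))]
      rw [map_mul, map_mul, map_finsuppProd, map_finsuppProd]
      congr 1
      apply Finsupp.prod_congr
      intro i _
      rw [map_pow, map_pow]
      exact pow_red_eq hq2 _ (hxq i) (α i)
  | add p p' hp hp' =>
    obtain ⟨r, hr, hpr⟩ := hp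
    obtain ⟨r', hr', hpr'⟩ := hp'
    refine ⟨r + r', Submodule.add_mem _ hr hr', ?_⟩
    have : p + p' - (r + r') = (p - r) + (p' - r') := by ring
    rw [this]
    exact Ideal.add_mem _ hpr hpr'

lemma mem_span_of_eval_eq_zero {F : Type u} [Field F] [Fintype F] {σ : Type v} [Fintype σ]
    (p : MvPolynomial σ F) (h : ∀ v : σ → F, eval v p = 0) :
    p ∈ Ideal.span
      (Set.range fun i : σ => (X i : MvPolynomial σ F) ^ Fintype.card F - X i) := by
  classical
  set I : Ideal (MvPolynomial σ F) :=
    Ideal.span (Set.range fun i : σ => (X i : MvPolynomial σ F) ^ Fintype.card F - X i)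
    with hI
  obtain ⟨r, hr, hpr⟩ := exists_restrict p
  have hIker : ∀ v : σ → F, ∀ f ∈ I, eval v f = 0 := by
    intro v f hf
    have hle : I ≤ RingHom.ker (eval v : MvPolynomial σ F →+* F) := by
      rw [hI, Ideal.span_le]
      rintro _ ⟨i, rfl⟩
      simp [RingHom.mem_ker, FiniteField.pow_card]
    exact hle hf
  have hrv : ∀ w : σ → F, eval w r = 0 := by
    intro w
    have h1 := hIker w _ hpr
    rw [map_sub, h w, zero_sub, neg_eq_zero] at h1
    exact h1
  have hr0 : r = 0 := by
    set e1 : F →+* ULift.{v} F := (ULift.ringEquiv.symm : F ≃+* ULift.{v} F).toRingHom with he1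
    set g : σ → ULift.{u} σ := ULift.up with hg
    have hginj : Function.Injective g := fun a b hab => congrArg ULift.down hab
    set r' : MvPolynomial (ULift.{u} σ) (ULift.{v} F) := rename g (map e1 r) with hr'
    have hmem : r' ∈ restrictDegree (ULift.{u} σ) (ULift.{v} F)
        (Fintype.card (ULift.{v} F) - 1) := by
      rw [mem_restrictDegree]
      intro s hs i
      rw [hr', support_rename_of_injective hginj] at hs
      obtain ⟨s0, hs0, rfl⟩ := Finset.mem_image.mp hs
      have hs0' : s0 ∈ r.support := support_map_subset _ _ hs0
      rw [Fintype.card_ulift]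
      have hmd : Finsupp.mapDomain g s0 i = s0 i.down := by
        have hi : i = g i.down := rfl
        rw [hi, Finsupp.mapDomain_apply hginj]
      rw [hmd]
      exact (mem_restrictDegree _ _ _).mp hr s0 hs0' i.down
    have hev : ∀ w' : ULift.{u} σ → ULift.{v} F, eval w' r' = 0 := by
      intro w'
      rw [hr', eval_rename, eval_map]
      have hcomp := eval₂_comp_left e1 (RingHom.id F) (fun s => (w' (g s)).down) r
      have h1 : e1.comp (RingHom.id F) = e1 := RingHom.comp_id _
      have h2 : (⇑e1) ∘ (fun s => (w' (g s)).down) = w' ∘ g := by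
        funext s; rfl
      rw [h1, h2] at hcomp
      rw [← hcomp]
      have h3 : eval₂ (RingHom.id F) (fun s => (w' (g s)).down) r
          = eval (fun s => (w' (g s)).down) r := rfl
      rw [h3, hrv, map_zero]
    have hr'0 : r' = 0 := MvPolynomial.eq_zero_of_eval_eq_zero _ _ r' hev hmem
    have hmap0 : map e1 r = 0 := by
      apply rename_injective g hginj
      rw [← hr', hr'0, map_zero]
    have hinj := MvPolynomial.map_injective (σ := σ) e1
      ((ULift.ringEquiv.symm : F ≃+* ULift.{v} F).injective)
    apply hinj
    rw [hmap0, map_zero]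
  rw [hr0, sub_zero] at hpr
  exact hpr

end ProjVarAux

open ProjVarAux in
theorem projection_variety_eq_variety_elimination_ideal
    {F : Type*} [Field F] [Fintype F] {q : ℕ} (hq : Fintype.card F = q)
    (n m : ℕ) (J : Ideal (MvPolynomial (Fin n ⊕ Fin m) F))
    (hx : ∀ i : Fin n,
      (X (Sum.inl i) : MvPolynomial (Fin n ⊕ Fin m) F) ^ q - X (Sum.inl i) ∈ J)
    (hy : ∀ j : Fin m,
      (X (Sum.inr j) : MvPolynomial (Fin n ⊕ Fin m) F) ^ q - X (Sum.inr j) ∈ J) :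
    {b : Fin m → F | ∃ a : Fin n → F, ∀ f ∈ J, eval (Sum.elim a b) f = 0} =
      {b : Fin m → F | ∀ g : MvPolynomial (Fin m) F,
        rename Sum.inr g ∈ J → eval b g = 0} := by
  classical
  subst hq
  set q := Fintype.card F with hqdef
  have hq2 : 2 ≤ q := Fintype.one_lt_card
  ext b
  simp only [Set.mem_setOf_eq]
  constructor
  · rintro ⟨a, ha⟩ g hg
    have := ha _ hg
    rwa [eval_rename, Sum.elim_comp_inr] at this
  · intro hb
    by_contra hcon
    push_neg at hcon
    choose f hfJ hfne using hcon
    -- the key polynomial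
    set P : MvPolynomial (Fin n ⊕ Fin m) F :=
      ∑ a : Fin n → F,
        (rename (Sum.inl : Fin n → Fin n ⊕ Fin m) (indicator a)) * (f a) ^ (q - 1) with hP
    have hPJ : P ∈ J := by
      apply Ideal.sum_mem
      intro a _
      exact Ideal.mul_mem_left _ _ (Ideal.pow_mem_of_mem _ (hfJ a) _ (by omega))
    set h : MvPolynomial (Fin n ⊕ Fin m) F :=
      P * rename (Sum.inr : Fin m → Fin n ⊕ Fin m) (indicator b) with hh
    have hhJ : h ∈ J := Ideal.mul_mem_right _ _ hPJ
    -- h - rename inr (indicator b) vanishes everywhere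
    have hvan : ∀ v : (Fin n ⊕ Fin m) → F,
        eval v (h - rename Sum.inr (indicator b)) = 0 := by
      intro v
      have hv : v = Sum.elim (v ∘ Sum.inl) (v ∘ Sum.inr) := by
        funext s; cases s <;> rfl
      rw [map_sub, hh, map_mul, eval_rename]
      by_cases hb' : v ∘ Sum.inr = b
      · have h1 : eval (v ∘ Sum.inr) (indicator b) = 1 := by
          rw [hb']; exact eval_indicator_apply_eq_one b
        rw [h1, mul_one]
        have hP1 : eval v P = 1 := by
          rw [hP, map_sum]
          rw [Finset.sum_eq_single (v ∘ Sum.inl)]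
          · rw [map_mul, eval_rename, eval_indicator_apply_eq_one, one_mul, map_pow]
            apply FiniteField.pow_card_sub_one_eq_one
            have := hfne (v ∘ Sum.inl)
            rwa [← hb', ← hv] at this
          · intro a _ hane
            rw [map_mul, eval_rename, eval_indicator_apply_eq_zero _ _ (Ne.symm hane),
              zero_mul]
          · intro habs
            exact absurd (Finset.mem_univ _) habs
        rw [hP1, sub_self]
      · rw [eval_indicator_apply_eq_zero _ _ hb', mul_zero, sub_zero]
    have hspan : h - rename Sum.inr (indicator b) ∈
        Ideal.span (Set.range fun i : Fin n ⊕ Fin m =>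
          (X i : MvPolynomial (Fin n ⊕ Fin m) F) ^ q - X i) :=
      mem_span_of_eval_eq_zero _ hvan
    have hspanJ : h - rename Sum.inr (indicator b) ∈ J := by
      refine Ideal.span_le.mpr ?_ hspan
      rintro _ ⟨(i | j), rfl⟩
      · exact hx i
      · exact hy j
    have hgJ : rename (Sum.inr : Fin m → Fin n ⊕ Fin m) (indicator b) ∈ J := by
      have := J.sub_mem hhJ hspanJ
      rwa [sub_sub_cancel] at this
    have := hb (indicator b) hgJ
    rw [eval_indicator_apply_eq_one] at this
    exact one_ne_zero this
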